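/- In PGL(2,q) with q odd, every unipotent element (image of a nontrivial unipotent element of GL(2,q)) can be written as a product of two involutions. -/
import Mathlib


open Matrix MatrixGroups

abbrev PGL2 (F : Type*) [Field F] :=
  GL (Fin 2) F ⧸ Subgroup.center (GL (Fin 2) F)

theorem unipotent_in_pgl2_is_product_of_two_involutions
    (q : ℕ) (F : Type*) [Field F] [Fintype F]
    (hq : Fintype.card F = q) (hodd : Odd q) (x : PGL2 F)
    (hx : ∃ M U C : GL (Fin 2) F,
      QuotientGroup.mk' (Subgroup.center (GL (Fin 2) F)) M = x ∧
      (U : Matrix (Fin 2) (Fin 2) F) = !![1, 1; 0, 1] ∧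
      M = C * U * C⁻¹) :
    ∃ i j : PGL2 F, orderOf i = 2 ∧ orderOf j = 2 ∧ x = i * j := by
  obtain ⟨M, U, C, hM, hU, hMC⟩ := hx
  -- characteristic is not 2
  have hneg : (-1 : F) ≠ 1 := by
    intro h
    have hchar := (neg_one_eq_one_iff (R := F)).mp h
    have := FiniteField.even_card_of_char_two hchar
    rw [hq] at this
    rw [Nat.odd_iff] at hodd
    omega
  -- the two involutions in GL
  have hA2 : (!![1, 1; 0, -1] : Matrix (Fin 2) (Fin 2) F) * !![1, 1; 0, -1] = 1 := by
    ext i j; fin_cases i <;> fin_cases j <;>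
      simp [Matrix.mul_apply, Fin.sum_univ_two]
  have hB2 : (!![1, 0; 0, -1] : Matrix (Fin 2) (Fin 2) F) * !![1, 0; 0, -1] = 1 := by
    ext i j; fin_cases i <;> fin_cases j <;>
      simp [Matrix.mul_apply, Fin.sum_univ_two]
  set A : GL (Fin 2) F := ⟨!![1, 1; 0, -1], !![1, 1; 0, -1], hA2, hA2⟩ with hAdef
  set B : GL (Fin 2) F := ⟨!![1, 0; 0, -1], !![1, 0; 0, -1], hB2, hB2⟩ with hBdef
  have hAsq : A * A = 1 := by ext : 1; exact hA2
  have hBsq : B * B = 1 := by ext : 1; exact hB2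
  have hUBA : U = B * A := by
    ext : 1
    rw [hU]
    show _ = (B : Matrix (Fin 2) (Fin 2) F) * (A : Matrix (Fin 2) (Fin 2) F)
    ext i j; fin_cases i <;> fin_cases j <;>
      simp [hAdef, hBdef, Matrix.mul_apply, Fin.sum_univ_two]
  have hABne : A * B ≠ B * A := by
    intro h
    have h' : (A * B : GL (Fin 2) F).val = (B * A : GL (Fin 2) F).val := by rw [h]
    have := congrFun (congrFun h' 0) 1
    simp [hAdef, hBdef, Matrix.mul_apply, Fin.sum_univ_two, Units.val_mul] at this
    exact hneg this
  set φ := QuotientGroup.mk' (Subgroup.center (GL (Fin 2) F)) with hφ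
  set ψ := MulAut.conj C with hψ
  have hψB : ψ B = C * B * C⁻¹ := rfl
  have hψA : ψ A = C * A * C⁻¹ := rfl
  refine ⟨φ (ψ B), φ (ψ A), ?_, ?_, ?_⟩
  · apply orderOf_eq_prime
    · rw [pow_two, ← _root_.map_mul φ, ← _root_.map_mul ψ, hBsq, _root_.map_one ψ, _root_.map_one φ]
    · intro h
      have hmem : ψ B ∈ Subgroup.center (GL (Fin 2) F) :=
        (QuotientGroup.eq_one_iff _).mp h
      have hc := (Subgroup.mem_center_iff.mp hmem) (ψ A)
      rw [← _root_.map_mul ψ, ← _root_.map_mul ψ] at hc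
      exact hABne (ψ.injective hc)
  · apply orderOf_eq_prime
    · rw [pow_two, ← _root_.map_mul φ, ← _root_.map_mul ψ, hAsq, _root_.map_one ψ, _root_.map_one φ]
    · intro h
      have hmem : ψ A ∈ Subgroup.center (GL (Fin 2) F) :=
        (QuotientGroup.eq_one_iff _).mp h
      have hc := (Subgroup.mem_center_iff.mp hmem) (ψ B)
      rw [← _root_.map_mul ψ, ← _root_.map_mul ψ] at hc
      exact hABne ((ψ.injective hc).symm)
  · rw [← hM, hMC, hUBA,
      show (C * (B * A) * C⁻¹ : GL (Fin 2) F) = ψ (B * A) from rfl,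
      _root_.map_mul ψ, _root_.map_mul φ]
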